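/- Let l be a positive integer and D ∈ Mat_l(ℤ) a diagonal matrix with diagonal entries d_1, ..., d_l, where d_1 = ... = d_r = 1 and the remaining diagonal entries are powers of a prime p greater than 1. Then in the ring Mat_l(ℤ)_D (matrices with multiplication A ·_D B = ADB), the matrix units E_11, ..., E_rr form a set of r pairwise orthogonal primitive idempotents. -/

import Mathlib

lemma aux_mulD {l : ℕ} (d : Fin l → ℤ) (i : Fin l) (h : d i = 1) :
    Matrix.single i i (1:ℤ) * Matrix.diagonal d = Matrix.single i i 1 := by
  ext a b
  simp only [Matrix.mul_diagonal, Matrix.single, Matrix.of_apply, ite_mul, one_mul,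
    zero_mul]
  split_ifs with hc
  · obtain ⟨rfl, rfl⟩ := hc; exact h
  · rfl

lemma aux_Dmul {l : ℕ} (d : Fin l → ℤ) (i : Fin l) (h : d i = 1) :
    Matrix.diagonal d * Matrix.single i i (1:ℤ) = Matrix.single i i 1 := by
  ext a b
  simp only [Matrix.diagonal_mul, Matrix.single, Matrix.of_apply, mul_ite, mul_one,
    mul_zero]
  split_ifs with hc
  · obtain ⟨rfl, rfl⟩ := hc; exact h
  · rfl

lemma aux_sandwich {l : ℕ} (M : Matrix (Fin l) (Fin l) ℤ) (i : Fin l) :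
    Matrix.single i i (1:ℤ) * M * Matrix.single i i 1 =
      M i i • Matrix.single i i 1 := by
  ext a b
  simp [Matrix.mul_apply, Matrix.single, ite_and, Finset.sum_ite_eq, Finset.sum_ite_eq']
  split_ifs <;> aesop

/-- Let `D` be the diagonal integer matrix with diagonal entries
`d 1, …, d l`, where the first `r` entries equal `1` and the remaining ones are powers
of a prime `p` greater than `1`.  Then in the ring `Mat_l(ℤ)_D` (multiplication
`A ·_D B = A * D * B`) the matrix units `E₁₁, …, E_rr` are pairwise orthogonal
primitive idempotents. -/
theorem stmt1 {l : ℕ} (hl : 0 < l) (p : ℕ) (hp : p.Prime) (r : ℕ) (hr : r ≤ l)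
    (d : Fin l → ℤ) (hd1 : ∀ i : Fin l, (i : ℕ) < r → d i = 1)
    (hdp : ∀ i : Fin l, r ≤ (i : ℕ) → ∃ k : ℕ, 1 ≤ k ∧ d i = (p : ℤ) ^ k)
    (D : Matrix (Fin l) (Fin l) ℤ) (hD : D = Matrix.diagonal d) :
    (∀ i : Fin l, (i : ℕ) < r →
      Matrix.single i i (1 : ℤ) * D * Matrix.single i i 1 =
        Matrix.single i i 1) ∧
    (∀ i j : Fin l, (i : ℕ) < r → (j : ℕ) < r → i ≠ j →
      Matrix.single i i (1 : ℤ) * D * Matrix.single j j 1 = 0) ∧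
    (∀ i : Fin l, (i : ℕ) < r →
      ¬ ∃ f g : Matrix (Fin l) (Fin l) ℤ, f ≠ 0 ∧ g ≠ 0 ∧
        f * D * f = f ∧ g * D * g = g ∧ f * D * g = 0 ∧ g * D * f = 0 ∧
        Matrix.single i i (1 : ℤ) = f + g) := by
  subst hD
  refine ⟨?_, ?_, ?_⟩
  · intro i hi
    rw [aux_mulD d i (hd1 i hi), Matrix.single_mul_single_same, one_mul]
  · intro i j hi hj hij
    rw [aux_mulD d i (hd1 i hi), Matrix.single_mul_single_of_ne (h := hij)]
  · intro i hi ⟨f, g, hf0, hg0, hff, hgg, hfg, hgf, hsum⟩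
    set E := Matrix.single i i (1:ℤ) with hE
    have hED : E * Matrix.diagonal d = E := aux_mulD d i (hd1 i hi)
    have hDE : Matrix.diagonal d * E = E := aux_Dmul d i (hd1 i hi)
    -- f = E * f
    have h1 : E * f = f := by
      have : E * Matrix.diagonal d * f = f := by
        rw [hsum, add_mul, add_mul, hff, hgf, add_zero]
      rwa [hED] at this
    have hEE : E * E = E := by
      rw [hE]; simpa using Matrix.single_mul_single_same (c := (1:ℤ)) i i i 1
    have h2 : f * E = f := by
      rw [← hDE, ← mul_assoc]
      calc f * Matrix.diagonal d * E = f * Matrix.diagonal d * (f + g) := by rw [← hsum]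
        _ = f * Matrix.diagonal d * f + f * Matrix.diagonal d * g := by rw [mul_add]
        _ = f := by rw [hff, hfg, add_zero]
    have hfc : f = f i i • E := by
      calc f = E * f * E := by rw [h1, h2]
        _ = f i i • E := aux_sandwich f i
    -- idempotency at entry (i,i)
    have hc2 : f i i * f i i = f i i := by
      have := hff
      rw [hfc] at this
      have h3 : (f i i * f i i) • E = f i i • E := by
        calc (f i i * f i i) • E = (f i i • E) * Matrix.diagonal d * (f i i • E) := by
              rw [Matrix.smul_mul, Matrix.smul_mul, Matrix.mul_smul, hED, smul_smul, hEE]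
          _ = f i i • E := this
      have := congrFun (congrFun h3 i) i
      simpa [hE, Matrix.single] using this
    have hc : f i i = 1 := by
      have h0 : f i i * (f i i - 1) = 0 := by rw [mul_sub, mul_one, hc2, sub_self]
      rcases mul_eq_zero.mp h0 with h | h
      · exfalso; apply hf0; rw [hfc, h, zero_smul]
      · linarith
    -- then g i i = 0
    have hgii : g i i = 0 := by
      have := congrFun (congrFun hsum i) i
      simp [hE, Matrix.single, Matrix.add_apply, hc] at this
      linarith
    -- but g = g i i • E by symmetry
    have h1g : E * g = g := by
      have : E * Matrix.diagonal d * g = g := by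
        rw [hsum, add_mul, add_mul, hgg, hfg, zero_add]
      rwa [hED] at this
    have h2g : g * E = g := by
      rw [← hDE, ← mul_assoc]
      calc g * Matrix.diagonal d * E = g * Matrix.diagonal d * (f + g) := by rw [← hsum]
        _ = g * Matrix.diagonal d * f + g * Matrix.diagonal d * g := by rw [mul_add]
        _ = g := by rw [hgg, hgf, zero_add]
    have hgc : g = g i i • E := by
      calc g = E * g * E := by rw [h1g, h2g]
        _ = g i i • E := aux_sandwich g i
    exact hg0 (by rw [hgc, hgii, zero_smul])
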